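/- Let M be a compact Riemann surface of genus 2 and S a spin bundle with h⁰(S) = 0. The subspace W ⊂ H⁰(M; K³) spanned by all products αβ with α, β ∈ H⁰(M; K ⊗ S) is 3-dimensional, and every element of W can itself be written as a product αβ of two elements of H⁰(M; K ⊗ S). -/

import Mathlib

/-- Factor a complex binary quadratic form. -/
lemma quad_factor (a b c : ℂ) (h : ¬(a = 0 ∧ b = 0 ∧ c = 0)) :
    ∃ p q r s : ℂ, a = p * r ∧ b = p * s + q * r ∧ c = q * s ∧
      ¬(p = 0 ∧ q = 0) ∧ ¬(r = 0 ∧ s = 0) := by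
  by_cases ha : a = 0
  · by_cases hc : c = 0
    · have hb : b ≠ 0 := by tauto
      exact ⟨b, 0, 0, 1, by simp [ha], by simp, by simp [hc], by simp [hb], by simp⟩
    · exact ⟨0, 1, b, c, by simp [ha], by ring, by ring, by simp, by simp [hc]⟩
  · obtain ⟨d, hd⟩ := IsAlgClosed.exists_pow_nat_eq (k := ℂ) (b ^ 2 - 4 * a * c) (n := 2)
      (by norm_num)
    refine ⟨a, (b - d) / 2, 1, (b + d) / (2 * a), by ring, ?_, ?_, by simp [ha], by simp⟩
    · field_simp
      ring
    · field_simp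
      linear_combination hd

lemma expand_prod {A : Type*} [CommRing A] [Algebra ℂ A] (p q r s : ℂ) (α β : A) :
    (p • α + q • β) * (r • α + s • β) =
      (p * r) • (α * α) + (p * s + q * r) • (α * β) + (q * s) • (β * β) := by
  simp only [Algebra.smul_def, map_mul, map_add]
  ring



/-- Genus 2, spin bundle `S` with `h⁰(S) = 0`, so that
`h⁰(KS) = 2` and `h⁰(K³) = 5`.  Sections are modelled inside an integral
domain `A` (meromorphic sections), `H0KS = H⁰(M;K⊗S)`,
`H0K3 = H⁰(M;K³)`, products of two sections of `KS` landing in `K³`.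
The subspace `W ⊂ H⁰(M;K³)` spanned by the products `αβ` with
`α, β ∈ H⁰(KS)` is 3-dimensional, and every element of `W` is itself such a
product. -/
theorem span_of_products_is_three_dimensional_and_decomposable
    {A : Type*} [CommRing A] [IsDomain A] [Algebra ℂ A]
    (H0KS H0K3 : Submodule ℂ A)
    (hdimKS : Module.finrank ℂ H0KS = 2)
    (hdimK3 : Module.finrank ℂ H0K3 = 5)
    (hmul : ∀ a ∈ H0KS, ∀ b ∈ H0KS, a * b ∈ H0K3) :
    Module.finrank ℂ
      (Submodule.span ℂ {x : A | ∃ a ∈ H0KS, ∃ b ∈ H0KS, x = a * b}) = 3 ∧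
    ∀ ψ ∈ Submodule.span ℂ {x : A | ∃ a ∈ H0KS, ∃ b ∈ H0KS, x = a * b},
      ∃ a ∈ H0KS, ∃ b ∈ H0KS, ψ = a * b := by
  have hfd : FiniteDimensional ℂ H0KS := by
    apply FiniteDimensional.of_finrank_pos; omega
  let bb : Module.Basis (Fin 2) ℂ H0KS := Module.finBasisOfFinrankEq ℂ H0KS hdimKS
  set α : A := (bb 0 : A) with hα
  set β : A := (bb 1 : A) with hβ
  have hαmem : α ∈ H0KS := (bb 0).2
  have hβmem : β ∈ H0KS := (bb 1).2
  -- linear independence of α, β inside A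
  have hindAB : ∀ p q : ℂ, p • α + q • β = 0 → p = 0 ∧ q = 0 := by
    intro p q hpq
    have hli : LinearIndependent ℂ (fun i => (bb i : A)) :=
      bb.linearIndependent.map' H0KS.subtype H0KS.ker_subtype
    have := (Fintype.linearIndependent_iff.mp hli) ![p, q] ?_
    · exact ⟨this 0, this 1⟩
    · simpa [Fin.sum_univ_two] using hpq
  -- nonzero combinations are nonzero
  have hnz : ∀ p q : ℂ, ¬(p = 0 ∧ q = 0) → p • α + q • β ≠ 0 := by
    intro p q hpq h
    exact hpq (hindAB p q h)
  -- every element of H0KS is a combination of α and β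
  have hrep : ∀ a ∈ H0KS, ∃ p q : ℂ, a = p • α + q • β := by
    intro a ha
    refine ⟨bb.repr ⟨a, ha⟩ 0, bb.repr ⟨a, ha⟩ 1, ?_⟩
    have := bb.sum_repr ⟨a, ha⟩
    rw [Fin.sum_univ_two] at this
    have := congrArg (Subtype.val) this
    simp only [Submodule.coe_add, SetLike.val_smul] at this
    exact this.symm
  set v : Fin 3 → A := ![α * α, α * β, β * β] with hv
  set S : Set A := {x : A | ∃ a ∈ H0KS, ∃ b ∈ H0KS, x = a * b} with hS
  -- span S = span (range v)
  have hspan : Submodule.span ℂ S = Submodule.span ℂ (Set.range v) := by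
    apply le_antisymm
    · rw [Submodule.span_le]
      rintro x ⟨a, ha, b, hb, rfl⟩
      obtain ⟨p, q, rfl⟩ := hrep a ha
      obtain ⟨r, s, rfl⟩ := hrep b hb
      rw [expand_prod]
      have h0 : v 0 ∈ Submodule.span ℂ (Set.range v) := Submodule.subset_span ⟨0, rfl⟩
      have h1 : v 1 ∈ Submodule.span ℂ (Set.range v) := Submodule.subset_span ⟨1, rfl⟩
      have h2 : v 2 ∈ Submodule.span ℂ (Set.range v) := Submodule.subset_span ⟨2, rfl⟩
      simp only [hv, Matrix.cons_val_zero, Matrix.cons_val_one, Matrix.head_cons,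
        Matrix.cons_val_two, Matrix.tail_cons] at h0 h1 h2
      exact Submodule.add_mem _ (Submodule.add_mem _ (Submodule.smul_mem _ _ h0)
        (Submodule.smul_mem _ _ h1)) (Submodule.smul_mem _ _ h2)
    · rw [Submodule.span_le]
      rintro x ⟨i, rfl⟩
      fin_cases i
      · exact Submodule.subset_span ⟨α, hαmem, α, hαmem, rfl⟩
      · exact Submodule.subset_span ⟨α, hαmem, β, hβmem, rfl⟩
      · exact Submodule.subset_span ⟨β, hβmem, β, hβmem, rfl⟩
  -- linear independence of v
  have hli3 : LinearIndependent ℂ v := by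
    rw [Fintype.linearIndependent_iff]
    intro g hg
    by_contra hne
    push_neg at hne
    have hnot : ¬(g 0 = 0 ∧ g 1 = 0 ∧ g 2 = 0) := by
      obtain ⟨i, hi⟩ := hne
      fin_cases i <;> tauto
    obtain ⟨p, q, r, s, h1, h2, h3, hpq, hrs⟩ := quad_factor (g 0) (g 1) (g 2) hnot
    have hprod : (p • α + q • β) * (r • α + s • β) = 0 := by
      rw [expand_prod, ← h1, ← h2, ← h3]
      simpa [hv, Fin.sum_univ_three] using hg
    rcases mul_eq_zero.mp hprod with h | h
    · exact hnz p q hpq h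
    · exact hnz r s hrs h
  constructor
  · rw [hspan, finrank_span_eq_card hli3]
    simp
  · intro ψ hψ
    rw [hspan, Submodule.mem_span_range_iff_exists_fun] at hψ
    obtain ⟨g, hg⟩ := hψ
    by_cases hzero : g 0 = 0 ∧ g 1 = 0 ∧ g 2 = 0
    · refine ⟨0, H0KS.zero_mem, 0, H0KS.zero_mem, ?_⟩
      rw [← hg]
      simp [Fin.sum_univ_three, hzero.1, hzero.2.1, hzero.2.2]
    · obtain ⟨p, q, r, s, h1, h2, h3, hpq, hrs⟩ := quad_factor (g 0) (g 1) (g 2) hzero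
      refine ⟨p • α + q • β, ?_, r • α + s • β, ?_, ?_⟩
      · exact H0KS.add_mem (H0KS.smul_mem _ hαmem) (H0KS.smul_mem _ hβmem)
      · exact H0KS.add_mem (H0KS.smul_mem _ hαmem) (H0KS.smul_mem _ hβmem)
      · rw [expand_prod, ← h1, ← h2, ← h3, ← hg]
        simp [hv, Fin.sum_univ_three]
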